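/- Let r be a square root on a representable pseudo MV-algebra M = Γ(G,u) and set w = r(0)⁻ ⊙ r(0)⁻. Then r(0) + r(0) = u − w and r(0) + r(0) = −w + u (so (u−w)/2 exists and equals r(0)), and r(0) belongs to the commutative center C(G), i.e., x + r(0) = r(0) + x for every x ∈ G. -/

import Mathlib

section Core

variable {G : Type} [Lattice G] [AddGroup G]

/-- `u` is a strong unit of the ℓ-group `G`. -/
def IsStrongUnit (u : G) : Prop :=
  0 ≤ u ∧ ∀ g : G, ∃ n : ℕ, 1 ≤ n ∧ g ≤ n • u

/-- Truncated addition `x ⊕ y = (x + y) ⊓ u` of the pseudo MV-algebra `Γ(G,u)`. -/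
def oplus (u x y : G) : G := (x + y) ⊓ u

/-- Left negation `x⁻ = u - x`. -/
def negl (u x : G) : G := u - x

/-- Right negation `x~ = -x + u`. -/
def negr (u x : G) : G := -x + u

/-- `x ⊙ y = (x - u + y) ⊔ 0`. -/
def odot (u x y : G) : G := (x - u + y) ⊔ 0

/-- `r` is a square root on the pseudo MV-algebra `M = Γ(G,u)`:
it maps `M` to `M` and satisfies (Sq1), (Sq2), (Sq3). -/
def IsSquareRoot (u : G) (r : G → G) : Prop :=
  (∀ x, 0 ≤ x → x ≤ u → 0 ≤ r x ∧ r x ≤ u) ∧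
  (∀ x, 0 ≤ x → x ≤ u → odot u (r x) (r x) = x) ∧
  (∀ x y, 0 ≤ x → x ≤ u → 0 ≤ y → y ≤ u → odot u y y ≤ x → y ≤ r x) ∧
  (∀ x, 0 ≤ x → x ≤ u → r (negl u x) = oplus u (negl u (r x)) (r 0)) ∧
  (∀ x, 0 ≤ x → x ≤ u → r (negr u x) = oplus u (r 0) (negr u (r x)))

/-- `r` is strict: `r 0 = r 0⁻`. -/
def IsStrict (u : G) (r : G → G) : Prop := r 0 = negl u (r 0)

end Core

/-- An additive structure is two-divisible if every element is `h + h` for some `h`. -/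
def TwoDivisible (A : Type) [Add A] : Prop := ∀ g : A, ∃ h : A, h + h = g
/-- A bundled linearly ordered (not necessarily abelian) group with a strong unit;
`Γ((K i).carrier, (K i).u)` is then a linearly ordered pseudo MV-algebra. -/
structure LinUnitalGroup : Type 1 where
  carrier : Type
  [grp : AddGroup carrier]
  [lin : LinearOrder carrier]
  covl : ∀ a b c : carrier, b ≤ c → a + b ≤ a + c
  covr : ∀ a b c : carrier, b ≤ c → b + a ≤ c + a
  u : carrier
  u_nonneg : 0 ≤ u
  strong : ∀ g : carrier, ∃ n : ℕ, 1 ≤ n ∧ g ≤ n • u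

attribute [instance] LinUnitalGroup.grp LinUnitalGroup.lin

/-- The pseudo MV-algebra `M = Γ(G,u)` is representable: there is a family of linearly
ordered pseudo MV-algebras `Γ((K i).carrier,(K i).u)` and an injective homomorphism
(preserving `⊕`, `⁻`, `~`, `0`, `1`) of `M` into their direct product which is
surjective in each coordinate. -/
def IsRepresentable {G : Type} [Lattice G] [AddGroup G] (u : G) : Prop :=
  ∃ (ι : Type) (K : ι → LinUnitalGroup) (f : G → ∀ i, (K i).carrier),
    (∀ x, 0 ≤ x → x ≤ u → ∀ i, 0 ≤ f x i ∧ f x i ≤ (K i).u) ∧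
    (∀ i, f 0 i = 0) ∧
    (∀ i, f u i = (K i).u) ∧
    (∀ x y, 0 ≤ x → x ≤ u → 0 ≤ y → y ≤ u → ∀ i,
      f (oplus u x y) i = min (f x i + f y i) (K i).u) ∧
    (∀ x, 0 ≤ x → x ≤ u → ∀ i, f (negl u x) i = (K i).u - f x i) ∧
    (∀ x, 0 ≤ x → x ≤ u → ∀ i, f (negr u x) i = -(f x i) + (K i).u) ∧
    (∀ x y, 0 ≤ x → x ≤ u → 0 ≤ y → y ≤ u → (∀ i, f x i = f y i) → x = y) ∧
    (∀ i, ∀ z : (K i).carrier, 0 ≤ z → z ≤ (K i).u →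
      ∃ x, 0 ≤ x ∧ x ≤ u ∧ f x i = z)

/- ===== Auxiliary lemmas ===== -/

section MyHelpers

variable {A : Type} [Lattice A] [AddGroup A]
  [CovariantClass A A (· + ·) (· ≤ ·)]
  [CovariantClass A A (Function.swap (· + ·)) (· ≤ ·)]

lemma lat_decomp (u a : A) : ((a - u) ⊔ 0) + (a ⊓ u) = a := by
  have h1 : (a - u) ⊔ 0 = (a ⊔ u) - u := by
    rw [sup_sub, sub_self]
  have h2 : u - (a ⊔ u) + a = a ⊓ u := by
    rw [sub_eq_add_neg, neg_sup, add_inf, inf_add, neg_add_cancel_right,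
      add_neg_cancel, zero_add, inf_comm]
  rw [h1, ← h2]
  simp [sub_eq_add_neg, add_assoc, neg_add_cancel_left]

lemma lat_half {u a : A} (h : a - u + a ≤ 0) : a + a ≤ u := by
  have h2 : a + (-u + a) ≤ 0 := by
    rw [← add_assoc, ← sub_eq_add_neg]; exact h
  have h3 : -u + a ≤ -a := by
    have := add_le_add_right h2 (-a)
    rwa [← add_assoc, neg_add_cancel, zero_add, add_zero] at this
  have h4 := add_le_add_left h3 a
  rw [neg_add_cancel, add_assoc] at h4
  have := add_le_add_right h4 u
  rwa [add_neg_cancel_left, add_zero] at this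

lemma odot_as (u x y : A) : odot u x y = negr u (oplus u (negl u y) (negl u x)) := by
  unfold odot negr oplus negl
  rw [neg_inf, sup_add, neg_add_cancel]
  congr 1
  simp [sub_eq_add_neg, neg_add_rev, add_assoc, neg_add_cancel_left]

lemma inf_as (u x y : A) (hx : 0 ≤ x) (hy : 0 ≤ y) :
    odot u x (oplus u (negl u x) y) = x ⊓ y := by
  unfold odot oplus negl
  rw [add_inf]
  have h1 : x - u + (u - x + y) = y := by
    simp [sub_eq_add_neg, add_assoc, neg_add_cancel_left]
  have h2 : x - u + u = x := by
    simp [sub_eq_add_neg, add_assoc, neg_add_cancel_left]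
  rw [h1, h2, inf_comm y x]
  exact sup_eq_left.mpr (le_inf hx hy)

lemma P_as (u a b : A) : (a + b - u) ⊔ 0 = odot u a (negl u ((negl u b) ⊓ a)) := by
  unfold odot negl
  have h1 : a - u + (u - ((u - b) ⊓ a)) = a + (-((u - b) ⊓ a)) := by
    simp [sub_eq_add_neg, add_assoc, neg_add_cancel_left]
  have h2 : -((u - b) ⊓ a) = (b - u) ⊔ (-a) := by
    rw [neg_inf]
    congr 1
    simp [sub_eq_add_neg, neg_add_rev, neg_neg]
  have h3 : a + b - u = a + (b - u) := by
    rw [sub_eq_add_neg, add_assoc, ← sub_eq_add_neg]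
  rw [h3, h1, h2, add_sup, add_neg_cancel, sup_assoc, sup_idem]

end MyHelpers

section MyLin

variable {A : Type} [LinearOrder A] [AddGroup A]
  [CovariantClass A A (· + ·) (· ≤ ·)]
  [CovariantClass A A (Function.swap (· + ·)) (· ≤ ·)]

lemma fodot_simp (U p q : A) :
    -(min ((U - p) + (U - q)) U) + U = (q - U + p) ⊔ 0 := by
  have hrw : (U - p) + (U - q) = U + (-p + (U - q)) := by
    rw [sub_eq_add_neg, add_assoc]
  rcases le_total ((U - p) + (U - q)) U with h | h
  · rw [min_eq_left h]
    have h1 : -p + (U - q) ≤ 0 := by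
      rw [hrw] at h
      exact (add_le_add_iff_left U).mp (by simpa using h)
    have h2 : U - q ≤ p := by
      have := (add_le_add_iff_left p).mpr h1
      simpa [add_neg_cancel_left] using this
    have h3 : 0 ≤ q - U + p := by
      have := (add_le_add_iff_left (q - U)).mpr h2
      simpa [sub_eq_add_neg, add_assoc, neg_add_cancel_left] using this
    rw [sup_eq_left.mpr h3]
    simp [sub_eq_add_neg, neg_add_rev, add_assoc, neg_add_cancel_left, neg_neg]
  · rw [min_eq_right h]
    have h1 : 0 ≤ -p + (U - q) := by
      rw [hrw] at h
      exact (add_le_add_iff_left U).mp (by simpa using h)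
    have h2 : p ≤ U - q := by
      have := (add_le_add_iff_left p).mpr h1
      simpa [add_neg_cancel_left] using this
    have h3 : q - U + p ≤ 0 := by
      have := (add_le_add_iff_left (q - U)).mpr h2
      simpa [sub_eq_add_neg, add_assoc, neg_add_cancel_left] using this
    rw [sup_eq_right.mpr h3, neg_add_cancel]

lemma finf_simp (U a c : A) (ha : 0 ≤ a) (hc : 0 ≤ c) :
    (a - U + min ((U - a) + c) U) ⊔ 0 = min a c := by
  have hrw : (U - a) + c = U + (-a + c) := by rw [sub_eq_add_neg, add_assoc]
  rcases le_total ((U - a) + c) U with h | h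
  · rw [min_eq_left h]
    have h1 : -a + c ≤ 0 := by
      rw [hrw] at h
      exact (add_le_add_iff_left U).mp (by simpa using h)
    have h2 : c ≤ a := by
      have := (add_le_add_iff_left a).mpr h1
      simpa [add_neg_cancel_left] using this
    have h4 : a - U + ((U - a) + c) = c := by
      simp [sub_eq_add_neg, add_assoc, neg_add_cancel_left]
    rw [h4, sup_eq_left.mpr hc, min_eq_right h2]
  · rw [min_eq_right h]
    have h1 : 0 ≤ -a + c := by
      rw [hrw] at h
      exact (add_le_add_iff_left U).mp (by simpa using h)
    have h2 : a ≤ c := by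
      have := (add_le_add_iff_left a).mpr h1
      simpa [add_neg_cancel_left] using this
    have h4 : a - U + U = a := by simp [sub_eq_add_neg, add_assoc]
    rw [h4, sup_eq_left.mpr ha, min_eq_left h2]

lemma Pmatch (U b z : A) (hcomm : z + b = b + z) :
    (z - U + (U - min (U - b) z)) ⊔ 0 = (b - U + (U - min (U - z) b)) ⊔ 0 := by
  rcases le_total z (U - b) with h | h
  · have hzb : z + b ≤ U := by
      have := add_le_add_left h b
      rwa [sub_add_cancel] at this
    have hb : b ≤ U - z := by
      have h2 : b + z ≤ (U - z) + z := by rw [sub_add_cancel, ← hcomm]; exact hzb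
      exact (add_le_add_iff_right z).mp h2
    rw [min_eq_right h, min_eq_right hb]
    have e1 : z - U + (U - z) = 0 := by
      simp [sub_eq_add_neg, add_assoc, neg_add_cancel_left]
    have e2 : b - U + (U - b) = 0 := by
      simp [sub_eq_add_neg, add_assoc, neg_add_cancel_left]
    rw [e1, e2]
  · have hzb : U ≤ z + b := by
      have := add_le_add_left h b
      rwa [sub_add_cancel] at this
    have hb : U - z ≤ b := by
      have h2 : (U - z) + z ≤ b + z := by rw [sub_add_cancel, ← hcomm]; exact hzb
      exact (add_le_add_iff_right z).mp h2
    rw [min_eq_left h, min_eq_left hb]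
    have e1 : z - U + (U - (U - b)) = z + (b + -U) := by
      simp [sub_eq_add_neg, neg_add_rev, neg_neg, add_assoc, neg_add_cancel_left]
    have e2 : b - U + (U - (U - z)) = b + (z + -U) := by
      simp [sub_eq_add_neg, neg_add_rev, neg_neg, add_assoc, neg_add_cancel_left]
    rw [e1, e2, ← add_assoc, ← add_assoc, hcomm]

lemma engine (U b c z : A) (hU0 : 0 ≤ U) (hz0 : 0 < z) (hzU : z < U)
    (h2 : (min ((U - c) + b) U - U + min ((U - c) + b) U) ⊔ 0 = U - z)
    (h3 : (min (b + (-c + U)) U - U + min (b + (-c + U)) U) ⊔ 0 = -z + U) :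
    z + b = b + z := by
  have hbc : b ≤ c := by
    by_contra hcb
    push_neg at hcb
    have h0 : 0 ≤ -c + b := le_neg_add_iff_le.mpr hcb.le
    have hUle : U ≤ (U - c) + b := by
      rw [sub_eq_add_neg, add_assoc]
      exact le_add_of_nonneg_right h0
    rw [min_eq_right hUle, sub_self, zero_add, sup_eq_left.mpr hU0] at h2
    have hz : z = 0 := by
      have h5 : U + -z = U + 0 := by
        rw [add_zero, ← sub_eq_add_neg, ← h2]
      have := add_left_cancel h5
      simpa [neg_eq_zero] using this
    exact absurd hz (ne_of_gt hz0)
  have hcb0 : -c + b ≤ 0 := neg_add_nonpos_iff.mpr hbc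
  have hmin2 : (U - c) + b ≤ U := by
    rw [sub_eq_add_neg, add_assoc]
    calc U + (-c + b) ≤ U + 0 := add_le_add_right hcb0 U
    _ = U := add_zero U
  have hmin3 : b + (-c + U) ≤ U := by
    have h5 : b + (-c + U) ≤ c + (-c + U) := add_le_add_left hbc _
    rwa [add_neg_cancel_left] at h5
  rw [min_eq_left hmin2] at h2
  rw [min_eq_left hmin3] at h3
  have e2' : (U - c) + b - U + ((U - c) + b) = U + (-c + (b + (-c + b))) := by
    simp [sub_eq_add_neg, add_assoc, neg_add_cancel_left]
  rw [e2'] at h2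
  have hUz : (0:A) < U - z := sub_pos.mpr hzU
  have h2' : U + (-c + (b + (-c + b))) = U - z := by
    rcases le_total (U + (-c + (b + (-c + b)))) 0 with hle | hge
    · rw [sup_eq_right.mpr hle] at h2
      rw [← h2] at hUz
      exact absurd hUz (lt_irrefl 0)
    · rwa [sup_eq_left.mpr hge] at h2
  have e2 : -c + (b + (-c + b)) = -z := by
    rw [sub_eq_add_neg] at h2'
    exact add_left_cancel h2'
  have e3' : b + (-c + U) - U + (b + (-c + U)) = b + (-c + (b + (-c + U))) := by
    simp [sub_eq_add_neg, add_assoc, neg_add_cancel_left]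
  rw [e3'] at h3
  have hzU' : (0:A) < -z + U :=
    lt_of_not_ge fun hle => absurd (neg_add_nonpos_iff.mp hle) (not_le.mpr hzU)
  have h3' : b + (-c + (b + (-c + U))) = -z + U := by
    rcases le_total (b + (-c + (b + (-c + U)))) 0 with hle | hge
    · rw [sup_eq_right.mpr hle] at h3
      rw [← h3] at hzU'
      exact absurd hzU' (lt_irrefl 0)
    · rwa [sup_eq_left.mpr hge] at h3
  have e3 : b + (-c + (b + -c)) = -z := by
    have hre : b + (-c + (b + (-c + U))) = (b + (-c + (b + -c))) + U := by
      simp [add_assoc]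
    rw [hre] at h3'
    exact add_right_cancel h3'
  have hz2 : z = -(-c + (b + (-c + b))) := by rw [e2, neg_neg]
  have hz3 : z = -(b + (-c + (b + -c))) := by rw [e3, neg_neg]
  have g1 : z + b = c + (-b + c) := by
    rw [hz3]
    simp [neg_add_rev, neg_neg, add_assoc, neg_add_cancel_left]
  have g2 : b + z = c + (-b + c) := by
    rw [hz2]
    simp [neg_add_rev, neg_neg, add_assoc, neg_add_cancel_left]
  rw [g1, g2]

end MyLin

instance (K : LinUnitalGroup) : CovariantClass K.carrier K.carrier (· + ·) (· ≤ ·) :=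
  ⟨fun a _ _ h => K.covl a _ _ h⟩

instance (K : LinUnitalGroup) :
    CovariantClass K.carrier K.carrier (Function.swap (· + ·)) (· ≤ ·) :=
  ⟨fun a _ _ h => K.covr a _ _ h⟩

/- ===== End auxiliary lemmas ===== -/

/-- for a square root `r` on a representable pseudo MV-algebra
`M = Γ(G,u)` and `w = r(0)⁻ ⊙ r(0)⁻` one has `r(0) + r(0) = u - w = -w + u`
and `r(0)` lies in the commutative center of `G`. -/
theorem stmt_11 {G : Type} [Lattice G] [AddGroup G]
    [CovariantClass G G (· + ·) (· ≤ ·)]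
    [CovariantClass G G (Function.swap (· + ·)) (· ≤ ·)]
    (u : G) (hu : IsStrongUnit u) (hrep : IsRepresentable u)
    (r : G → G) (hr : IsSquareRoot u r)
    (w : G) (hw : w = odot u (negl u (r 0)) (negl u (r 0))) :
    r 0 + r 0 = u - w ∧ r 0 + r 0 = -w + u ∧ ∀ x : G, x + r 0 = r 0 + x := by
  obtain ⟨hmap, hsq1, _hsq2, hsq3l, hsq3r⟩ := hr
  obtain ⟨hu0, hustrong⟩ := hu
  set s := r 0 with hs
  obtain ⟨hs0, hsu⟩ := hmap 0 le_rfl hu0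
  have hodot_ss : odot u s s = 0 := hsq1 0 le_rfl hu0
  have hodot_ss' : (s - u + s) ⊔ 0 = 0 := hodot_ss
  have hss : s + s ≤ u := lat_half (sup_eq_right.mp hodot_ss')
  -- membership helpers
  have mem_negl : ∀ x : G, 0 ≤ x → x ≤ u → 0 ≤ negl u x ∧ negl u x ≤ u := by
    intro x hx0 hxu
    refine ⟨sub_nonneg.mpr hxu, ?_⟩
    calc u - x ≤ u - 0 := sub_le_sub_left hx0 u
    _ = u := sub_zero u
  have mem_negr : ∀ x : G, 0 ≤ x → x ≤ u → 0 ≤ negr u x ∧ negr u x ≤ u := by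
    intro x hx0 hxu
    refine ⟨le_neg_add_iff_le.mpr hxu, ?_⟩
    have := add_le_add_left (neg_nonpos.mpr hx0) u
    rwa [zero_add] at this
  have mem_oplus : ∀ x y : G, 0 ≤ x → 0 ≤ y → 0 ≤ oplus u x y ∧ oplus u x y ≤ u :=
    fun x y hx hy => ⟨le_inf (add_nonneg hx hy) hu0, inf_le_right⟩
  obtain ⟨ι, K, f, h0le, hf0, _hfu, hoplus, hnegl, hnegr, hinj, _hsurj⟩ := hrep
  -- transfer of odot
  have fodot : ∀ x y, 0 ≤ x → x ≤ u → 0 ≤ y → y ≤ u → ∀ i,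
      f (odot u x y) i = (f x i - (K i).u + f y i) ⊔ 0 := by
    intro x y hx0 hxu hy0 hyu i
    have hny := mem_negl y hy0 hyu
    have hnx := mem_negl x hx0 hxu
    have hop := mem_oplus (negl u y) (negl u x) hny.1 hnx.1
    rw [odot_as u x y, hnegr _ hop.1 hop.2 i, hoplus _ _ hny.1 hny.2 hnx.1 hnx.2 i,
      hnegl y hy0 hyu i, hnegl x hx0 hxu i]
    exact fodot_simp (K i).u (f y i) (f x i)
  -- transfer of inf
  have finf : ∀ x y, 0 ≤ x → x ≤ u → 0 ≤ y → y ≤ u → ∀ i,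
      f (x ⊓ y) i = min (f x i) (f y i) := by
    intro x y hx0 hxu hy0 hyu i
    have hnx := mem_negl x hx0 hxu
    have hop := mem_oplus (negl u x) y hnx.1 hy0
    rw [← inf_as u x y hx0 hy0, fodot x _ hx0 hxu hop.1 hop.2 i,
      hoplus _ _ hnx.1 hnx.2 hy0 hyu i, hnegl x hx0 hxu i]
    exact finf_simp (K i).u (f x i) (f y i) (h0le x hx0 hxu i).1 (h0le y hy0 hyu i).1
  -- b + b ≤ U per coordinate
  have hbb : ∀ i, f s i + f s i ≤ (K i).u := by
    intro i
    have h5 := fodot s s hs0 hsu hs0 hsu i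
    rw [hodot_ss, hf0 i] at h5
    exact lat_half (sup_eq_right.mp h5.symm)
  -- engine per coordinate
  have engine_x : ∀ x, 0 ≤ x → x ≤ u → ∀ i, 0 < f x i → f x i < (K i).u →
      f x i + f s i = f s i + f x i := by
    intro x hx0 hxu i hz0 hzU
    obtain ⟨hrx0, hrxu⟩ := hmap x hx0 hxu
    have hnx := mem_negl x hx0 hxu
    have hnrx := mem_negl (r x) hrx0 hrxu
    obtain ⟨hrnx0, hrnxu⟩ := hmap (negl u x) hnx.1 hnx.2
    have hde : f (r (negl u x)) i = min ((K i).u - f (r x) i + f s i) (K i).u := by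
      rw [hsq3l x hx0 hxu, hoplus _ _ hnrx.1 hnrx.2 hs0 hsu i, hnegl (r x) hrx0 hrxu i]
    have h2 : (f (r (negl u x)) i - (K i).u + f (r (negl u x)) i) ⊔ 0
        = (K i).u - f x i := by
      rw [← fodot _ _ hrnx0 hrnxu hrnx0 hrnxu i, hsq1 (negl u x) hnx.1 hnx.2,
        hnegl x hx0 hxu i]
    rw [hde] at h2
    have hnrx' := mem_negr (r x) hrx0 hrxu
    have hnx' := mem_negr x hx0 hxu
    obtain ⟨hrnx0', hrnxu'⟩ := hmap (negr u x) hnx'.1 hnx'.2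
    have hee : f (r (negr u x)) i = min (f s i + (-(f (r x) i) + (K i).u)) (K i).u := by
      rw [hsq3r x hx0 hxu, hoplus _ _ hs0 hsu hnrx'.1 hnrx'.2 i, hnegr (r x) hrx0 hrxu i]
    have h3 : (f (r (negr u x)) i - (K i).u + f (r (negr u x)) i) ⊔ 0
        = -(f x i) + (K i).u := by
      rw [← fodot _ _ hrnx0' hrnxu' hrnx0' hrnxu' i, hsq1 (negr u x) hnx'.1 hnx'.2,
        hnegr x hx0 hxu i]
    rw [hee] at h3
    exact engine (K i).u (f s i) (f (r x) i) (f x i) (K i).u_nonneg hz0 hzU h2 h3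
  -- commutation with the top per coordinate
  have Ucomm : ∀ i, (K i).u + f s i = f s i + (K i).u := by
    intro i
    obtain ⟨hb0, hbU⟩ := h0le s hs0 hsu i
    rcases eq_or_lt_of_le hb0 with hb | hb
    · rw [← hb, add_zero, zero_add]
    · have hbU' : f s i < (K i).u := by
        rcases eq_or_lt_of_le hbU with he | hl
        · exfalso
          have h6 := hbb i
          rw [he] at h6
          have h7 : (K i).u ≤ 0 :=
            (add_le_add_iff_left (K i).u).mp (h6.trans_eq (add_zero _).symm)
          have hUz : (K i).u = 0 := le_antisymm h7 (K i).u_nonneg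
          rw [he, hUz] at hb
          exact lt_irrefl 0 hb
        · exact hl
      have hns := mem_negl s hs0 hsu
      have hz'val : f (negl u s) i = (K i).u - f s i := hnegl s hs0 hsu i
      have hz'0 : 0 < f (negl u s) i := by rw [hz'val]; exact sub_pos.mpr hbU'
      have hz'U : f (negl u s) i < (K i).u := by
        rw [hz'val]
        rcases lt_or_ge ((K i).u - f s i) (K i).u with h | h
        · exact h
        · exfalso
          have h8 : (K i).u + 0 ≤ (K i).u + (-(f s i)) := by
            rw [add_zero, ← sub_eq_add_neg]; exact h
          have h9 : (0:(K i).carrier) ≤ -(f s i) := (add_le_add_iff_left _).mp h8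
          have := neg_nonneg.mp h9
          exact lt_irrefl _ (lt_of_le_of_lt this hb)
      have hcm := engine_x (negl u s) hns.1 hns.2 i hz'0 hz'U
      rw [hz'val, sub_add_cancel] at hcm
      calc (K i).u + f s i = (f s i + ((K i).u - f s i)) + f s i := by rw [← hcm]
      _ = f s i + (K i).u := by rw [add_assoc, sub_add_cancel]
  -- commutation per coordinate
  have comm_coord : ∀ x, 0 ≤ x → x ≤ u → ∀ i, f x i + f s i = f s i + f x i := by
    intro x hx0 hxu i
    obtain ⟨hz0, hzU⟩ := h0le x hx0 hxu i
    rcases eq_or_lt_of_le hz0 with h | h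
    · rw [← h, zero_add, add_zero]
    · rcases eq_or_lt_of_le hzU with h' | h'
      · rw [h']; exact Ucomm i
      · exact engine_x x hx0 hxu i h h'
  -- commutation on [0,u]
  have comm_Icc : ∀ x, 0 ≤ x → x ≤ u → x + s = s + x := by
    intro x hx0 hxu
    have hS1 := mem_oplus x s hx0 hs0
    have hS2 := mem_oplus s x hs0 hx0
    have hP1 : (0:G) ≤ (x + s - u) ⊔ 0 := le_sup_right
    have hP1u : (x + s - u) ⊔ 0 ≤ u := by
      refine sup_le ?_ hu0
      calc x + s - u ≤ u + u - u := sub_le_sub_right (add_le_add hxu hsu) u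
      _ = u := add_sub_cancel_right u u
    have hP2 : (0:G) ≤ (s + x - u) ⊔ 0 := le_sup_right
    have hP2u : (s + x - u) ⊔ 0 ≤ u := by
      refine sup_le ?_ hu0
      calc s + x - u ≤ u + u - u := sub_le_sub_right (add_le_add hsu hxu) u
      _ = u := add_sub_cancel_right u u
    have hSeq : oplus u x s = oplus u s x := by
      apply hinj _ _ hS1.1 hS1.2 hS2.1 hS2.2
      intro i
      rw [hoplus x s hx0 hxu hs0 hsu i, hoplus s x hs0 hsu hx0 hxu i,
        comm_coord x hx0 hxu i]
    have hPeq : (x + s - u) ⊔ 0 = (s + x - u) ⊔ 0 := by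
      apply hinj _ _ hP1 hP1u hP2 hP2u
      intro i
      have hns := mem_negl s hs0 hsu
      have hnx := mem_negl x hx0 hxu
      have hinf1 : (0:G) ≤ negl u s ⊓ x := le_inf hns.1 hx0
      have hinf1u : negl u s ⊓ x ≤ u := le_trans inf_le_right hxu
      have hninf1 := mem_negl _ hinf1 hinf1u
      have hinf2 : (0:G) ≤ negl u x ⊓ s := le_inf hnx.1 hs0
      have hinf2u : negl u x ⊓ s ≤ u := le_trans inf_le_right hsu
      have hninf2 := mem_negl _ hinf2 hinf2u
      have e1 : f ((x + s - u) ⊔ 0) i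
          = (f x i - (K i).u + ((K i).u - min ((K i).u - f s i) (f x i))) ⊔ 0 := by
        rw [P_as u x s, fodot x _ hx0 hxu hninf1.1 hninf1.2 i, hnegl _ hinf1 hinf1u i,
          finf (negl u s) x hns.1 hns.2 hx0 hxu i, hnegl s hs0 hsu i]
      have e2 : f ((s + x - u) ⊔ 0) i
          = (f s i - (K i).u + ((K i).u - min ((K i).u - f x i) (f s i))) ⊔ 0 := by
        rw [P_as u s x, fodot s _ hs0 hsu hninf2.1 hninf2.2 i, hnegl _ hinf2 hinf2u i,
          finf (negl u x) s hnx.1 hnx.2 hs0 hsu i, hnegl x hx0 hxu i]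
      rw [e1, e2]
      exact Pmatch (K i).u (f s i) (f x i) (comm_coord x hx0 hxu i)
    have hSeq' : (x + s) ⊓ u = (s + x) ⊓ u := hSeq
    calc x + s = ((x + s - u) ⊔ 0) + ((x + s) ⊓ u) := (lat_decomp u (x + s)).symm
    _ = ((s + x - u) ⊔ 0) + ((s + x) ⊓ u) := by rw [hPeq, hSeq']
    _ = s + x := lat_decomp u (s + x)
  -- full commutation
  have comm_all : ∀ x : G, x + s = s + x := by
    have hnsmul : ∀ n : ℕ, (0:G) ≤ n • u := by
      intro n
      induction n with
      | zero => rw [zero_nsmul]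
      | succ n ih =>
        rw [succ_nsmul]
        exact add_nonneg ih hu0
    have Hpos : ∀ n : ℕ, ∀ g : G, 0 ≤ g → g ≤ n • u → g + s = s + g := by
      intro n
      induction n with
      | zero =>
        intro g h0 h1
        rw [zero_nsmul] at h1
        have : g = 0 := le_antisymm h1 h0
        rw [this, zero_add, add_zero]
      | succ n ih =>
        intro g h0 h1
        have ha0 : (0:G) ≤ g ⊓ (n • u) := le_inf h0 (hnsmul n)
        have hanu : g ⊓ (n • u) ≤ n • u := inf_le_right
        have hbb0 : (0:G) ≤ -(g ⊓ (n • u)) + g :=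
          le_neg_add_iff_le.mpr inf_le_left
        have hbbu : -(g ⊓ (n • u)) + g ≤ u := by
          have hng : -(n • u) + g ≤ u := by
            have h2 : g ≤ n • u + u := by rwa [succ_nsmul] at h1
            have := add_le_add_right h2 (-(n • u))
            rwa [neg_add_cancel_left] at this
          have hrw : -(g ⊓ (n • u)) + g = (-g ⊔ -(n • u)) + g := by rw [neg_inf]
          rw [hrw, sup_add, neg_add_cancel]
          exact sup_le hu0 hng
        have hg : g ⊓ (n • u) + (-(g ⊓ (n • u)) + g) = g := add_neg_cancel_left _ _
        have ca := ih (g ⊓ (n • u)) ha0 hanu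
        have cb := comm_Icc (-(g ⊓ (n • u)) + g) hbb0 hbbu
        calc g + s = g ⊓ (n • u) + ((-(g ⊓ (n • u)) + g) + s) := by
              rw [← add_assoc, hg]
        _ = g ⊓ (n • u) + (s + (-(g ⊓ (n • u)) + g)) := by rw [cb]
        _ = (g ⊓ (n • u) + s) + (-(g ⊓ (n • u)) + g) := by rw [add_assoc]
        _ = (s + g ⊓ (n • u)) + (-(g ⊓ (n • u)) + g) := by rw [ca]
        _ = s + g := by rw [add_assoc, hg]
    intro x
    obtain ⟨n, -, hn⟩ := hustrong (-x)
    have h1 : (0:G) ≤ n • u + x := by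
      have := add_le_add_left hn x
      rwa [neg_add_cancel] at this
    obtain ⟨m, -, hm⟩ := hustrong (n • u + x)
    have c1 := Hpos m (n • u + x) h1 hm
    have c2 := Hpos n (n • u) (hnsmul n) le_rfl
    have key : n • u + (x + s) = n • u + (s + x) := by
      calc n • u + (x + s) = (n • u + x) + s := by rw [add_assoc]
      _ = s + (n • u + x) := c1
      _ = (s + n • u) + x := by rw [add_assoc]
      _ = (n • u + s) + x := by rw [c2]
      _ = n • u + (s + x) := by rw [add_assoc]
    exact add_left_cancel key
  -- final assembly
  have hw' : w = (u - s - s) ⊔ 0 := by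
    rw [hw]
    show ((u - s) - u + (u - s)) ⊔ 0 = (u - s - s) ⊔ 0
    congr 1
    simp [sub_eq_add_neg, add_assoc, neg_add_cancel_left]
  have ucomm : u + s = s + u := comm_all u
  have h2s : u + (s + s) = (s + s) + u := by
    calc u + (s + s) = (u + s) + s := by rw [add_assoc]
    _ = (s + u) + s := by rw [ucomm]
    _ = s + (u + s) := by rw [add_assoc]
    _ = s + (s + u) := by rw [ucomm]
    _ = (s + s) + u := by rw [add_assoc]
  have hneg : -((u - s - s) ⊔ 0) = (s + s - u) ⊓ 0 := by
    rw [neg_sup, neg_zero]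
    congr 1
    simp [sub_eq_add_neg, neg_add_rev, neg_neg, add_assoc]
  refine ⟨?_, ?_, fun x => comm_all x⟩
  · rw [hw', sub_eq_add_neg, hneg, add_inf, add_zero]
    have huu : u + (s + s - u) = s + s := by
      rw [sub_eq_add_neg, ← add_assoc, h2s, add_assoc, add_neg_cancel, add_zero]
    rw [huu]
    exact (inf_eq_left.mpr hss).symm
  · rw [hw', hneg, inf_add, zero_add, sub_add_cancel]
    exact (inf_eq_left.mpr hss).symm
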